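/- The forward transformation is correct: for a nested cluster basis (W_s) with transfer matrices (E_s), the recursively computed coefficients satisfy x̂_s = W_s* (x restricted to ŝ) for every cluster s, where at leaves x̂_s := W_s* x|_ŝ and at internal nodes x̂_s := Σ_{s' ∈ sons(s)} E_{s'}* x̂_{s'}. -/

import Mathlib

variable {I : Type} [DecidableEq I]

inductive CTree (I : Type) where
  | node : Finset I → List (CTree I) → CTree I

namespace CTree

def label : CTree I → Finset I
  | node l _ => l

def sonsOf : CTree I → List (CTree I)
  | node _ s => s

def leaves : CTree I → List (Finset I)
  | node l [] => [l]
  | node _ (s :: ss) => (s :: ss).attach.flatMap fun c => c.1.leaves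
decreasing_by
  have h := List.sizeOf_lt_of_mem c.2
  simp at h ⊢
  omega

inductive Valid : CTree I → Prop where
  | leaf : ∀ l, Valid (node l [])
  | internal : ∀ l sons, sons ≠ [] →
      l = sons.foldr (fun s acc => s.label ∪ acc) ∅ →
      sons.Pairwise (fun a b => Disjoint a.label b.label) →
      (∀ s ∈ sons, Valid s) → Valid (node l sons)

inductive Subtree : CTree I → CTree I → Prop where
  | refl : ∀ t, Subtree t t
  | son : ∀ {t s : CTree I} {l : Finset I} {sons : List (CTree I)},
      s ∈ sons → Subtree t s → Subtree t (node l sons)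

end CTree

variable {I : Type} [DecidableEq I] [Fintype I] {k : ℕ}

namespace CTree

/-- Forward transformation: recursively computes the transformed coefficient vectors
`x̂_s`. At a leaf, `x̂_s := W_s* x|_ŝ`; at an internal node,
`x̂_s := Σ_{s' ∈ sons(s)} E_{s'}* x̂_{s'}`. -/
noncomputable def forward (W : CTree I → Matrix I (Fin k) ℂ)
    (E : CTree I → Matrix (Fin k) (Fin k) ℂ) (x : I → ℂ) : CTree I → Fin k → ℂ
  | node l [] =>
      (W (node l [])).conjTranspose.mulVec (fun i => if i ∈ l then x i else 0)
  | node _ (s :: ss) =>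
      ((s :: ss).attach.map
        (fun c => (E c.1).conjTranspose.mulVec (forward W E x c.1))).sum
decreasing_by
  have h := List.sizeOf_lt_of_mem c.2
  simp at h ⊢
  omega

/-- Backward transformation: given the coefficient vectors `ŷ` and the accumulated
coefficient `c` at the current node, at an internal node it adds `E_{t'} c` to
`ŷ_{t'}` and recurses; at a leaf it returns the (zero-padded) vector `V_t c`.
The result is the total contribution added to the output vector `y`. -/
noncomputable def backward (V : CTree I → Matrix I (Fin k) ℂ)
    (E : CTree I → Matrix (Fin k) (Fin k) ℂ) (yhat : CTree I → Fin k → ℂ) :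
    CTree I → (Fin k → ℂ) → I → ℂ
  | node l [], c => (V (node l [])).mulVec c
  | node _ (s :: ss), c =>
      ((s :: ss).attach.map
        (fun d => backward V E yhat d.1 (yhat d.1 + (E d.1).mulVec c))).sum
decreasing_by
  have h := List.sizeOf_lt_of_mem d.2
  simp at h ⊢
  omega

/-- The list of all nodes of a tree. -/
def nodesList : CTree I → List (CTree I)
  | node l ss => node l ss :: ss.attach.flatMap (fun s => nodesList s.1)
decreasing_by
  have h := List.sizeOf_lt_of_mem s.2
  simp at h ⊢
  omega

end CTree


section Aux
open CTree
variable {I : Type} [DecidableEq I] [Fintype I] {k : ℕ}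

lemma list_sum_apply {α : Type} (L : List (α → ℂ)) (j : α) :
    L.sum j = (L.map fun f => f j).sum := by
  induction L with
  | nil => rfl
  | cons f fs ih => simp [List.sum_cons, ih]

lemma mem_foldr_union (i : I) :
    ∀ L : List (Finset I), i ∈ L.foldr (· ∪ ·) ∅ ↔ ∃ t ∈ L, i ∈ t := by
  intro L
  induction L with
  | nil => simp
  | cons t ts ih => simp [ih]

lemma sum_ite_mem (i : I) (v : ℂ) :
    ∀ L : List (Finset I), L.Pairwise Disjoint →
    (if i ∈ L.foldr (· ∪ ·) ∅ then v else 0) = (L.map fun t => if i ∈ t then v else 0).sum := by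
  intro L
  induction L with
  | nil => simp
  | cons t ts ih =>
    intro hp
    rw [List.pairwise_cons] at hp
    simp only [List.foldr_cons, List.map_cons, List.sum_cons, Finset.mem_union]
    by_cases hi : i ∈ t
    · have h0 : i ∉ ts.foldr (· ∪ ·) ∅ := by
        rw [mem_foldr_union]
        rintro ⟨u, hu, hiu⟩
        exact (hp.1 u hu).forall_ne_finset hi hiu rfl
      rw [← ih hp.2]
      simp [hi, h0]
    · rw [← ih hp.2]
      simp [hi]

lemma finset_sum_list_sum {α β : Type} (s : Finset α) (L : List β) (g : β → α → ℂ) :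
    (∑ i ∈ s, (L.map fun b => g b i).sum) = (L.map fun b => ∑ i ∈ s, g b i).sum := by
  induction L with
  | nil => simp
  | cons b bs ih => simp [List.sum_cons, Finset.sum_add_distrib, ih]

lemma forward_correct_aux (W : CTree I → Matrix I (Fin k) ℂ)
    (E : CTree I → Matrix (Fin k) (Fin k) ℂ) (x : I → ℂ) :
    ∀ n : ℕ, ∀ s : CTree I, sizeOf s ≤ n → s.Valid →
    (∀ u : CTree I, u.Subtree s → ∀ i ∉ u.label, ∀ j : Fin k, W u i j = 0) →
    (∀ u : CTree I, u.Subtree s → ∀ u' ∈ u.sonsOf,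
      ∀ i ∈ u'.label, ∀ j : Fin k, W u i j = (W u' * E u') i j) →
    forward W E x s =
      (W s).conjTranspose.mulVec (fun i => if i ∈ s.label then x i else 0) := by
  intro n
  induction n using Nat.strong_induction_on with
  | _ n ih =>
  rintro ⟨l, sons⟩ hn hv hsupp hnested
  cases hv with
  | leaf l => rw [forward]; rfl
  | internal l sons hne hl hdisj hsons =>
    obtain ⟨c, cs, rfl⟩ : ∃ c cs, sons = c :: cs := by
      cases sons with
      | nil => exact absurd rfl hne
      | cons c cs => exact ⟨c, cs, rfl⟩
    rw [forward]
    funext j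
    rw [list_sum_apply, List.map_map]
    simp only [Function.comp_def]
    have hstep : ∀ d ∈ (c :: cs).attach,
        (E d.1).conjTranspose.mulVec (forward W E x d.1) j =
        ∑ i : I, if i ∈ d.1.label then (starRingEnd ℂ) (W (node l (c :: cs)) i j) * x i else 0 := by
      rintro ⟨d, hd⟩ -
      have hsize : sizeOf d < n := by
        have h1 := List.sizeOf_lt_of_mem hd
        have : sizeOf (node l (c :: cs)) ≤ n := hn
        simp only [node.sizeOf_spec] at this
        omega
      have hfwd : forward W E x d =
          (W d).conjTranspose.mulVec (fun i => if i ∈ d.label then x i else 0) := by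
        refine ih (sizeOf d) hsize d le_rfl (hsons d hd) ?_ ?_
        · intro u hu; exact hsupp u (Subtree.son hd hu)
        · intro u hu; exact hnested u (Subtree.son hd hu)
      simp only [hfwd, Matrix.mulVec_mulVec, ← Matrix.conjTranspose_mul]
      simp only [Matrix.mulVec, dotProduct, Matrix.conjTranspose_apply]
      rw [Fintype.sum_congr]
      intro i
      by_cases hi : i ∈ d.label
      · rw [← hnested (node l (c :: cs)) (Subtree.refl _) d hd i hi j]
        simp [hi]
      · simp [hi]
    rw [List.map_congr_left hstep]
    have hattach : ((c :: cs).attach.map fun d =>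
        ∑ i : I, if i ∈ d.1.label then (starRingEnd ℂ) (W (node l (c :: cs)) i j) * x i else 0) =
        ((c :: cs).map fun d =>
        ∑ i : I, if i ∈ d.label then (starRingEnd ℂ) (W (node l (c :: cs)) i j) * x i else 0) := by
      rw [← List.attach_map_val (l := c :: cs) (f := fun d =>
        ∑ i : I, if i ∈ d.label then (starRingEnd ℂ) (W (node l (c :: cs)) i j) * x i else 0)]
    rw [hattach]
    simp only [Matrix.mulVec, dotProduct, Matrix.conjTranspose_apply]
    have hRHS : ∀ i : I,
        (starRingEnd ℂ) (W (node l (c :: cs)) i j) * (if i ∈ label (node l (c :: cs)) then x i else 0)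
        = (((c :: cs).map (fun d => d.label)).map
            (fun t => if i ∈ t then (starRingEnd ℂ) (W (node l (c :: cs)) i j) * x i else 0)).sum := by
      intro i
      rw [← sum_ite_mem i _ _ (List.pairwise_map.mpr hdisj)]
      have : label (node l (c :: cs)) = ((c :: cs).map (fun d => d.label)).foldr (· ∪ ·) ∅ := by
        simp only [label, hl, List.foldr_map]
      rw [this, mul_ite, mul_zero]
    simp only [RCLike.star_def]
    rw [Fintype.sum_congr _ _ hRHS, finset_sum_list_sum, List.map_map]
    rfl

end Aux

open CTree in
/-- Correctness of the forward transformation: for a nested cluster basis `(W_s)` with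
transfer matrices `(E_s)`, the recursively computed coefficients satisfy
`x̂_s = W_s* x|_ŝ` for every cluster `s`. -/
theorem forward_correct {I : Type} [DecidableEq I] [Fintype I] {k : ℕ}
    (s : CTree I) (hs : s.Valid)
    (W : CTree I → Matrix I (Fin k) ℂ) (E : CTree I → Matrix (Fin k) (Fin k) ℂ)
    (hsupp : ∀ u : CTree I, u.Subtree s → ∀ i ∉ u.label, ∀ j : Fin k, W u i j = 0)
    (hnested : ∀ u : CTree I, u.Subtree s → ∀ u' ∈ u.sonsOf,
      ∀ i ∈ u'.label, ∀ j : Fin k, W u i j = (W u' * E u') i j)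
    (x : I → ℂ) :
    forward W E x s =
      (W s).conjTranspose.mulVec (fun i => if i ∈ s.label then x i else 0) :=
  forward_correct_aux W E x (sizeOf s) s le_rfl hs hsupp hnested
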